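/- For any graph G, Σ_{m=1}^{∞} f_G^+(m)/m = ∏_{p prime} (1 + f_G^+(p^2)/p^2 + ⋯ + f_G^+(p^v)/p^v), and this quantity is finite. -/

import Mathlib

open scoped BigOperators Classical

noncomputable section

/-- The vertex numbering `N_r` associated to an edge numbering `n` of the graph with
vertex set `Fin v` and edge set `E`: the lcm of `n a` over the edges `a` incident to `r`
(equal to `1` if `r` is isolated). -/
def vertexNum (v : ℕ) (E : Finset (Sym2 (Fin v))) (n : {a : Sym2 (Fin v) // a ∈ E} → ℕ+)
    (r : Fin v) : ℕ :=
  (E.attach.filter fun a => r ∈ a.1).lcm fun a => (n a : ℕ)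

/-- `f_G^+(m) = Σ_{N_1 ⋯ N_v = m} |μ(n_1) ⋯ μ(n_e)|`, the sum extending over all edge
numberings of the graph whose associated vertex numbering has product `m`. -/
def fGplus (v : ℕ) (E : Finset (Sym2 (Fin v))) (m : ℕ) : ℤ :=
  ∑ᶠ n : {a : Sym2 (Fin v) // a ∈ E} → ℕ+,
    if ∏ r, vertexNum v E n r = m then |∏ a, ArithmeticFunction.moebius (n a : ℕ)| else 0


namespace Stmt10
variable {v : ℕ} {E : Finset (Sym2 (Fin v))}
def term (v : ℕ) (E : Finset (Sym2 (Fin v))) (m : ℕ)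
    (n : {a : Sym2 (Fin v) // a ∈ E} → ℕ+) : ℤ :=
  if ∏ r, vertexNum v E n r = m then |∏ a, ArithmeticFunction.moebius (n a : ℕ)| else 0
lemma fGplus_def (m : ℕ) : fGplus v E m = ∑ᶠ n, term v E m n := rfl
lemma dvd_vertexNum (n : {a : Sym2 (Fin v) // a ∈ E} → ℕ+) {r : Fin v}
    {a : {a : Sym2 (Fin v) // a ∈ E}} (hr : r ∈ a.1) :
    (n a : ℕ) ∣ vertexNum v E n r :=
  Finset.dvd_lcm (by simp [hr])
lemma edge_dvd_prod (n : {a : Sym2 (Fin v) // a ∈ E} → ℕ+)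
    (a : {a : Sym2 (Fin v) // a ∈ E}) : (n a : ℕ) ∣ ∏ r, vertexNum v E n r := by
  obtain ⟨⟨x, y⟩, hxy⟩ := Quot.exists_rep a.1
  have hx : x ∈ a.1 := by rw [← hxy]; exact Sym2.mem_mk_left x y
  exact (dvd_vertexNum n hx).trans (Finset.dvd_prod_of_mem _ (Finset.mem_univ x))

def sfDiv (m : ℕ) : Finset ℕ+ :=
  (m.divisors.filter Squarefree).preimage (fun k : ℕ+ => (k : ℕ))
    (PNat.coe_injective.injOn)

lemma mem_sfDiv {m : ℕ} {k : ℕ+} : k ∈ sfDiv m ↔ (k : ℕ) ∣ m ∧ m ≠ 0 ∧ Squarefree (k : ℕ) := by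
  simp [sfDiv, Nat.mem_divisors, and_assoc]

def piSet (v : ℕ) (E : Finset (Sym2 (Fin v))) (m : ℕ) : Finset ({a : Sym2 (Fin v) // a ∈ E} → ℕ+) :=
  Fintype.piFinset fun _ => sfDiv m

lemma fGplus_eq_sum {m : ℕ} (hm : m ≠ 0) :
    fGplus v E m = ∑ n ∈ piSet v E m, term v E m n := by
  rw [fGplus_def]
  refine finsum_eq_finset_sum_of_support_subset _ fun n hn => ?_
  rw [Function.mem_support, term] at hn
  split_ifs at hn with hc
  · simp only [piSet, Finset.coe_sort_coe, Fintype.coe_piFinset, Set.mem_pi, Set.mem_univ,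
      forall_true_left]
    intro a
    refine mem_sfDiv.mpr ⟨hc ▸ edge_dvd_prod n a, hm, ?_⟩
    rw [← ArithmeticFunction.moebius_ne_zero_iff_squarefree]
    intro h0
    exact hn (by rw [abs_eq_zero]; exact Finset.prod_eq_zero (Finset.mem_univ a) h0)
  · exact absurd rfl hn
end Stmt10
namespace Stmt10
variable {v : ℕ} {E : Finset (Sym2 (Fin v))}

lemma term_nonneg (m : ℕ) (n : {a : Sym2 (Fin v) // a ∈ E} → ℕ+) : 0 ≤ term v E m n := by
  rw [term]; split_ifs; exacts [abs_nonneg _, le_refl 0]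

lemma term_le_one (m : ℕ) (n : {a : Sym2 (Fin v) // a ∈ E} → ℕ+) : term v E m n ≤ 1 := by
  rw [term]; split_ifs
  · rw [Finset.abs_prod]
    exact Finset.prod_le_one (fun a _ => abs_nonneg _)
      (fun a _ => ArithmeticFunction.abs_moebius_le_one)
  · exact zero_le_one

lemma fGplus_nonneg (m : ℕ) : 0 ≤ fGplus v E m := by
  rw [fGplus_def]
  exact finsum_nonneg (term_nonneg m)

lemma vertexNum_pos (n : {a : Sym2 (Fin v) // a ∈ E} → ℕ+) (r : Fin v) :
    0 < vertexNum v E n r := by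
  rw [Nat.pos_iff_ne_zero, Ne, vertexNum, Finset.lcm_eq_zero_iff]
  rintro ⟨a, -, ha⟩
  exact (n a).ne_zero ha

lemma prod_vertexNum_pos (n : {a : Sym2 (Fin v) // a ∈ E} → ℕ+) :
    0 < ∏ r, vertexNum v E n r :=
  Finset.prod_pos fun r _ => vertexNum_pos n r

lemma fGplus_zero : fGplus v E 0 = 0 := by
  rw [fGplus_def]
  refine finsum_eq_zero_of_forall_eq_zero fun n => ?_
  rw [term, if_neg (prod_vertexNum_pos n).ne']

lemma vertexNum_one (r : Fin v) :
    vertexNum v E (fun _ => 1) r = 1 :=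
  Nat.dvd_one.mp (Finset.lcm_dvd fun a _ => by simp)

lemma fGplus_one : fGplus v E 1 = 1 := by
  rw [fGplus_eq_sum one_ne_zero]
  rw [Finset.sum_eq_single_of_mem (fun _ => 1) ?mem ?other]
  · rw [term, if_pos (by simp [vertexNum_one])]
    simp
  case mem =>
    simp only [piSet, Fintype.mem_piFinset]
    intro a
    exact mem_sfDiv.mpr ⟨by simp, one_ne_zero, squarefree_one⟩
  case other =>
    intro n hn hne
    exfalso
    apply hne
    funext a
    simp only [piSet, Fintype.mem_piFinset] at hn
    have := (mem_sfDiv.mp (hn a)).1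
    exact PNat.coe_injective (Nat.dvd_one.mp this)

end Stmt10
namespace Stmt10
variable {v : ℕ} {E : Finset (Sym2 (Fin v))}

lemma sq_dvd (hE : ∀ a ∈ E, ¬ a.IsDiag) (n : {a : Sym2 (Fin v) // a ∈ E} → ℕ+)
    {q : ℕ} (hq : q.Prime) (hqm : q ∣ ∏ r, vertexNum v E n r) :
    q * q ∣ ∏ r, vertexNum v E n r := by
  obtain ⟨r, -, hr⟩ := hq.prime.exists_mem_finset_dvd hqm
  have h2 : q ∣ ∏ a ∈ E.attach.filter (fun a => r ∈ a.1), (n a : ℕ) :=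
    hr.trans (Finset.lcm_dvd fun a ha => Finset.dvd_prod_of_mem _ ha)
  obtain ⟨a, ha, hqa⟩ := hq.prime.exists_mem_finset_dvd h2
  obtain ⟨⟨x, y⟩, hxy⟩ := Quot.exists_rep a.1
  have hdiag := hE a.1 a.2
  rw [← hxy] at hdiag
  have hne : x ≠ y := fun h => hdiag (by simp [h, Sym2.mk_isDiag_iff])
  have hx : x ∈ a.1 := by rw [← hxy]; exact Sym2.mem_mk_left x y
  have hy : y ∈ a.1 := by rw [← hxy]; exact Sym2.mem_mk_right x y
  have hqx : q ∣ vertexNum v E n x := hqa.trans (dvd_vertexNum n hx)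
  have hqy : q ∣ vertexNum v E n y := hqa.trans (dvd_vertexNum n hy)
  have key : vertexNum v E n x * vertexNum v E n y ∣ ∏ r, vertexNum v E n r := by
    rw [← Finset.mul_prod_erase Finset.univ _ (Finset.mem_univ x)]
    exact mul_dvd_mul dvd_rfl
      (Finset.dvd_prod_of_mem _ (Finset.mem_erase.mpr ⟨hne.symm, Finset.mem_univ y⟩))
  exact (mul_dvd_mul hqx hqy).trans key

lemma fGplus_prime (hE : ∀ a ∈ E, ¬ a.IsDiag) {p : ℕ} (hp : p.Prime) :
    fGplus v E p = 0 := by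
  rw [fGplus_def]
  refine finsum_eq_zero_of_forall_eq_zero fun n => ?_
  rw [term, if_neg]
  intro hc
  have := sq_dvd hE n hp (hc ▸ dvd_refl p)
  rw [hc] at this
  have hle := Nat.le_of_dvd hp.pos this
  nlinarith [hp.two_le]

lemma squarefree_lcm {ι : Type*} (s : Finset ι) (f : ι → ℕ) (h : ∀ a ∈ s, Squarefree (f a)) :
    Squarefree (s.lcm f) := by
  classical
  induction s using Finset.induction with
  | empty => simpa using squarefree_one
  | @insert a s ha ih =>
    rw [Finset.lcm_insert]
    have h1 : Squarefree (f a) := h a (Finset.mem_insert_self a s)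
    have h2 : Squarefree (s.lcm f) := ih fun b hb => h b (Finset.mem_insert_of_mem hb)
    have hfa : f a ≠ 0 := h1.ne_zero
    have hsl : s.lcm f ≠ 0 := h2.ne_zero
    rw [lcm_eq_nat_lcm]
    refine Nat.squarefree_of_factorization_le_one (Nat.lcm_ne_zero hfa hsl) fun p => ?_
    rw [Nat.factorization_lcm hfa hsl]
    exact sup_le (h1.natFactorization_le_one p) (h2.natFactorization_le_one p)

lemma fGplus_prime_pow_zero {p : ℕ} (hp : p.Prime) {α : ℕ} (hα : v < α) :
    fGplus v E (p ^ α) = 0 := by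
  rw [fGplus_def]
  refine finsum_eq_zero_of_forall_eq_zero fun n => ?_
  rw [term]
  split_ifs with hc
  · by_cases hsf : ∀ a, Squarefree ((n a : ℕ))
    · exfalso
      have hsq : ∀ r, Squarefree (vertexNum v E n r) := fun r =>
        squarefree_lcm _ _ fun a _ => hsf a
      have hfac : (∏ r, vertexNum v E n r).factorization p ≤ v := by
        rw [Nat.factorization_prod fun r _ => (vertexNum_pos n r).ne']
        calc (∑ r, (vertexNum v E n r).factorization) p
            = ∑ r, (vertexNum v E n r).factorization p := by
              rw [Finsupp.finset_sum_apply]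
          _ ≤ ∑ _r : Fin v, 1 := Finset.sum_le_sum fun r _ =>
              (hsq r).natFactorization_le_one p
          _ = v := by simp
      rw [hc, hp.factorization_pow, Finsupp.single_eq_same] at hfac
      omega
    · push_neg at hsf
      obtain ⟨a, ha⟩ := hsf
      rw [abs_eq_zero]
      refine Finset.prod_eq_zero (Finset.mem_univ a) ?_
      rwa [← ArithmeticFunction.moebius_ne_zero_iff_squarefree, not_not] at ha
  · rfl

lemma sfDiv_prime_pow_subset {p : ℕ} (hp : p.Prime) (α : ℕ) :
    sfDiv (p ^ α) ⊆ {1, ⟨p, hp.pos⟩} := by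
  intro k hk
  obtain ⟨hdvd, -, hsf⟩ := mem_sfDiv.mp hk
  obtain ⟨i, hi, hki⟩ := (Nat.dvd_prime_pow hp).mp hdvd
  match i with
  | 0 => simp only [pow_zero] at hki
         simp [Finset.mem_insert, ← PNat.coe_inj, hki]
  | 1 =>
    simp only [pow_one] at hki
    exact Finset.mem_insert_of_mem (Finset.mem_singleton.mpr (PNat.coe_injective hki))
  | (i+2) =>
    exfalso
    rw [hki] at hsf
    exact hp.one_lt.ne' (Nat.isUnit_iff.mp (hsf p (by
      calc p * p = p ^ 2 := (sq p).symm
        _ ∣ p ^ (i+2) := pow_dvd_pow p (by omega))))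

lemma fGplus_prime_pow_le {p : ℕ} (hp : p.Prime) {α : ℕ} :
    fGplus v E (p ^ α) ≤ 2 ^ E.card := by
  rw [fGplus_eq_sum (pow_ne_zero α hp.ne_zero)]
  calc ∑ n ∈ piSet v E (p ^ α), term v E (p ^ α) n
      ≤ ∑ _n ∈ piSet v E (p ^ α), 1 := Finset.sum_le_sum fun n _ => term_le_one _ n
    _ = ((piSet v E (p ^ α)).card : ℤ) := by simp
    _ ≤ 2 ^ E.card := by
        have hcard : (piSet v E (p ^ α)).card ≤ 2 ^ E.card := by
          rw [piSet, Fintype.card_piFinset]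
          calc ∏ _a : {a : Sym2 (Fin v) // a ∈ E}, (sfDiv (p ^ α)).card
              ≤ ∏ _a : {a : Sym2 (Fin v) // a ∈ E}, 2 := Finset.prod_le_prod
                (fun _ _ => Nat.zero_le _)
                (fun a _ => le_trans (Finset.card_le_card (sfDiv_prime_pow_subset hp α))
                  ((Finset.card_insert_le _ _).trans (Nat.succ_le_succ (Finset.card_singleton _).le)))
            _ = 2 ^ E.card := by simp [Finset.card_univ, Fintype.card_coe]
        exact_mod_cast hcard

end Stmt10
namespace Stmt10
variable {v : ℕ} {E : Finset (Sym2 (Fin v))}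

lemma vertexNum_dvd {n : {a : Sym2 (Fin v) // a ∈ E} → ℕ+} {m : ℕ}
    (h : ∀ a, (n a : ℕ) ∣ m) (r : Fin v) : vertexNum v E n r ∣ m :=
  Finset.lcm_dvd fun a _ => h a

lemma mem_piSet {m : ℕ} {n : {a : Sym2 (Fin v) // a ∈ E} → ℕ+} :
    n ∈ piSet v E m ↔ ∀ a, (n a : ℕ) ∣ m ∧ m ≠ 0 ∧ Squarefree (n a : ℕ) := by
  simp only [piSet, Fintype.mem_piFinset, mem_sfDiv]

lemma vertexNum_mul {m₁ m₂ : ℕ} (hm : Nat.Coprime m₁ m₂)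
    (n₁ n₂ : {a : Sym2 (Fin v) // a ∈ E} → ℕ+)
    (h₁ : ∀ a, (n₁ a : ℕ) ∣ m₁) (h₂ : ∀ a, (n₂ a : ℕ) ∣ m₂) (r : Fin v) :
    vertexNum v E (fun a => n₁ a * n₂ a) r = vertexNum v E n₁ r * vertexNum v E n₂ r := by
  apply Nat.dvd_antisymm
  · refine Finset.lcm_dvd fun a ha => ?_
    rw [PNat.mul_coe]
    exact mul_dvd_mul (Finset.dvd_lcm ha) (Finset.dvd_lcm ha)
  · have hc : Nat.Coprime (vertexNum v E n₁ r) (vertexNum v E n₂ r) :=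
      Nat.Coprime.coprime_dvd_left (vertexNum_dvd h₁ r)
        (Nat.Coprime.coprime_dvd_right (vertexNum_dvd h₂ r) hm)
    refine Nat.Coprime.mul_dvd_of_dvd_of_dvd hc ?_ ?_
    · refine Finset.lcm_dvd fun a ha => ?_
      refine (dvd_mul_right (n₁ a : ℕ) (n₂ a : ℕ)).trans ?_
      rw [← PNat.mul_coe]
      exact Finset.dvd_lcm (f := fun a => ((n₁ a * n₂ a : ℕ+) : ℕ)) ha
    · refine Finset.lcm_dvd fun a ha => ?_
      refine (dvd_mul_left (n₂ a : ℕ) (n₁ a : ℕ)).trans ?_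
      rw [← PNat.mul_coe]
      exact Finset.dvd_lcm (f := fun a => ((n₁ a * n₂ a : ℕ+) : ℕ)) ha

/-- gcd of a `ℕ+` with a `ℕ`. -/
def pgcd (k : ℕ+) (m : ℕ) : ℕ+ := ⟨Nat.gcd (k : ℕ) m, Nat.gcd_pos_of_pos_left m k.pos⟩

lemma fGplus_mul {m₁ m₂ : ℕ} (hm : Nat.Coprime m₁ m₂) (h₁ : m₁ ≠ 0) (h₂ : m₂ ≠ 0) :
    fGplus v E (m₁ * m₂) = fGplus v E m₁ * fGplus v E m₂ := by
  classical
  rw [fGplus_eq_sum (mul_ne_zero h₁ h₂), fGplus_eq_sum h₁, fGplus_eq_sum h₂,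
    Finset.sum_mul_sum, ← Finset.sum_product']
  symm
  refine Finset.sum_nbij' (i := fun p a => p.1 a * p.2 a)
    (j := fun n => (fun a => pgcd (n a) m₁, fun a => pgcd (n a) m₂))
    ?_ ?_ ?_ ?_ ?_
  · rintro ⟨n₁, n₂⟩ hp
    rw [Finset.mem_product] at hp
    rw [mem_piSet]
    intro a
    obtain ⟨hd₁, -, hs₁⟩ := mem_piSet.mp hp.1 a
    obtain ⟨hd₂, -, hs₂⟩ := mem_piSet.mp hp.2 a
    have hcop : Nat.Coprime (n₁ a : ℕ) (n₂ a : ℕ) :=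
      Nat.Coprime.coprime_dvd_right hd₂ (Nat.Coprime.coprime_dvd_left hd₁ hm)
    refine ⟨?_, mul_ne_zero h₁ h₂, ?_⟩
    · rw [PNat.mul_coe]; exact mul_dvd_mul hd₁ hd₂
    · rw [PNat.mul_coe, Nat.squarefree_mul hcop]; exact ⟨hs₁, hs₂⟩
  · intro n hn
    rw [Finset.mem_product]
    constructor <;> rw [mem_piSet] <;> intro a <;>
      obtain ⟨hd, -, hs⟩ := (mem_piSet.mp hn) a
    · exact ⟨Nat.gcd_dvd_right _ _, h₁, hs.squarefree_of_dvd (Nat.gcd_dvd_left _ _)⟩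
    · exact ⟨Nat.gcd_dvd_right _ _, h₂, hs.squarefree_of_dvd (Nat.gcd_dvd_left _ _)⟩
  · rintro ⟨n₁, n₂⟩ hp
    rw [Finset.mem_product] at hp
    have H := fun a => (mem_piSet.mp hp.1) a
    have H2 := fun a => (mem_piSet.mp hp.2) a
    refine Prod.ext (funext fun a => ?_) (funext fun a => ?_) <;>
      apply PNat.coe_injective <;>
      simp only [pgcd, PNat.mk_coe, PNat.mul_coe]
    · rw [Nat.Coprime.gcd_mul_right_cancel _
        (Nat.Coprime.coprime_dvd_left (H2 a).1 hm.symm)]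
      exact Nat.gcd_eq_left (H a).1
    · rw [mul_comm, Nat.Coprime.gcd_mul_right_cancel _
        (Nat.Coprime.coprime_dvd_left (H a).1 hm)]
      exact Nat.gcd_eq_left (H2 a).1
  · intro n hn
    funext a
    obtain ⟨hd, -, -⟩ := (mem_piSet.mp hn) a
    apply PNat.coe_injective
    simp only [PNat.mul_coe, pgcd, PNat.mk_coe]
    show Nat.gcd (n a : ℕ) m₁ * Nat.gcd (n a : ℕ) m₂ = n a
    rw [← Nat.Coprime.gcd_mul _ hm]
    exact Nat.gcd_eq_left hd
  · rintro ⟨n₁, n₂⟩ hp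
    rw [Finset.mem_product] at hp
    have hd₁ : ∀ a, ((n₁ : _) a : ℕ) ∣ m₁ := fun a => ((mem_piSet.mp hp.1) a).1
    have hd₂ : ∀ a, ((n₂ : _) a : ℕ) ∣ m₂ := fun a => ((mem_piSet.mp hp.2) a).1
    have hVN := vertexNum_mul hm n₁ n₂ hd₁ hd₂
    have hcond : (∏ r, vertexNum v E (fun a => n₁ a * n₂ a) r = m₁ * m₂) ↔
        (∏ r, vertexNum v E n₁ r = m₁ ∧ ∏ r, vertexNum v E n₂ r = m₂) := by
      rw [Finset.prod_congr rfl (fun r _ => hVN r), Finset.prod_mul_distrib]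
      constructor
      · intro h
        have hco : Nat.Coprime (∏ r, vertexNum v E n₁ r) m₂ :=
          Nat.Coprime.prod_left fun r _ => Nat.Coprime.coprime_dvd_left (vertexNum_dvd hd₁ r) hm
        have hco2 : Nat.Coprime m₁ (∏ r, vertexNum v E n₂ r) :=
          Nat.Coprime.prod_right fun r _ =>
            Nat.Coprime.coprime_dvd_right (vertexNum_dvd hd₂ r) hm
        have hP1 : ∏ r, vertexNum v E n₁ r = m₁ := by
          refine Nat.dvd_antisymm ?_ ?_
          · exact Nat.Coprime.dvd_of_dvd_mul_right hco (h ▸ dvd_mul_right _ _)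
          · exact Nat.Coprime.dvd_of_dvd_mul_right hco2 (h.symm ▸ dvd_mul_right m₁ m₂)
        refine ⟨hP1, ?_⟩
        rw [hP1] at h
        exact Nat.eq_of_mul_eq_mul_left (Nat.pos_of_ne_zero h₁) h
      · rintro ⟨ha, hb⟩
        rw [ha, hb]
    rw [term, term, term, if_congr hcond rfl rfl]
    by_cases hA : ∏ r, vertexNum v E n₁ r = m₁ <;>
      by_cases hB : ∏ r, vertexNum v E n₂ r = m₂ <;>
      simp only [hA, hB, if_pos, if_neg, and_true, and_false, false_and, if_true, if_false,
        true_and, mul_zero, zero_mul, if_neg (fun h : False => h.elim)]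
    · symm
      have hmu : ∀ a : {a : Sym2 (Fin v) // a ∈ E},
            ArithmeticFunction.moebius ((n₁ a * n₂ a : ℕ+) : ℕ) =
              ArithmeticFunction.moebius ((n₁ : _) a : ℕ) *
                ArithmeticFunction.moebius ((n₂ : _) a : ℕ) := fun a => by
          rw [PNat.mul_coe]
          exact ArithmeticFunction.isMultiplicative_moebius.map_mul_of_coprime
            (Nat.Coprime.coprime_dvd_right (hd₂ a) (Nat.Coprime.coprime_dvd_left (hd₁ a) hm))
      calc |∏ a, ArithmeticFunction.moebius ((n₁ a * n₂ a : ℕ+) : ℕ)|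
          = |(∏ a, ArithmeticFunction.moebius ((n₁ : _) a : ℕ)) *
              ∏ a, ArithmeticFunction.moebius ((n₂ : _) a : ℕ)| := by
            rw [← Finset.prod_mul_distrib]
            exact congrArg _ (Finset.prod_congr rfl fun a _ => hmu a)
        _ = _ := abs_mul _ _
end Stmt10
namespace Stmt10

/-- the summand of the Dirichlet series at `s = 1`. -/
def fdiv (v : ℕ) (E : Finset (Sym2 (Fin v))) : ℕ → ℝ := fun m => (fGplus v E m : ℝ) / m

variable {v : ℕ} {E : Finset (Sym2 (Fin v))}

lemma fdiv_zero : fdiv v E 0 = 0 := by simp [fdiv]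

lemma fdiv_one : fdiv v E 1 = 1 := by simp [fdiv, fGplus_one]

lemma fdiv_nonneg (m : ℕ) : 0 ≤ fdiv v E m :=
  div_nonneg (by exact_mod_cast fGplus_nonneg m) (Nat.cast_nonneg m)

lemma fdiv_mul {a b : ℕ} (hab : Nat.Coprime a b) :
    fdiv v E (a * b) = fdiv v E a * fdiv v E b := by
  rcases eq_or_ne a 0 with rfl | ha
  · have hb : b = 1 := by simpa using hab
    subst hb
    simp [fdiv, fGplus_zero, fGplus_one]
  rcases eq_or_ne b 0 with rfl | hb
  · have ha1 : a = 1 := by simpa using hab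
    subst ha1
    simp [fdiv, fGplus_zero, fGplus_one]
  · simp only [fdiv]
    rw [fGplus_mul hab ha hb]
    push_cast
    rw [mul_div_mul_comm]

lemma fdiv_tsum_prime_pow (hE : ∀ a ∈ E, ¬ a.IsDiag) {p : ℕ} (hp : p.Prime) :
    (∑' e : ℕ, fdiv v E (p ^ e)) = 1 + ∑ α ∈ Finset.Icc 2 v, fdiv v E (p ^ α) := by
  have hz : ∀ e ∉ insert 0 (insert 1 (Finset.Icc 2 v)), fdiv v E (p ^ e) = 0 := by
    intro e he
    simp only [Finset.mem_insert, Finset.mem_Icc, not_or, not_and, not_le] at he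
    have hv : v < e := by omega
    simp [fdiv, fGplus_prime_pow_zero hp hv]
  rw [tsum_eq_sum hz, Finset.sum_insert (by simp), Finset.sum_insert (by simp)]
  rw [pow_zero, pow_one, fdiv_one,
    show fdiv v E p = 0 by simp [fdiv, fGplus_prime hE hp]]
  ring

lemma fdiv_prime_pow_le {p : ℕ} (hp : p.Prime) {α : ℕ} (hα : 2 ≤ α) :
    fdiv v E (p ^ α) ≤ (2 : ℝ) ^ E.card / (p : ℝ) ^ 2 := by
  have h1 : (fGplus v E (p ^ α) : ℝ) ≤ (2 : ℝ) ^ E.card := by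
    exact_mod_cast (fGplus_prime_pow_le hp : fGplus v E (p ^ α) ≤ 2 ^ E.card)
  have h2 : (0 : ℝ) < (p : ℝ) ^ 2 := by
    have := hp.pos
    positivity
  have h3 : (p : ℝ) ^ 2 ≤ ((p ^ α : ℕ) : ℝ) := by
    push_cast
    exact pow_le_pow_right₀ (by exact_mod_cast hp.one_le) hα
  exact div_le_div₀ (by positivity) h1 h2 h3

lemma fdiv_summable (hE : ∀ a ∈ E, ¬ a.IsDiag) : Summable (fdiv v E) := by
  have hK : Summable (fun k : ℕ => 1 / (k : ℝ) ^ 2) :=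
    Real.summable_one_div_nat_pow.mpr one_lt_two
  set c : ℝ := (2 : ℝ) ^ E.card * v with hc
  have hc0 : 0 ≤ c := by positivity
  set C : ℝ := Real.exp (c * ∑' k : ℕ, 1 / (k : ℝ) ^ 2) with hC
  have hsum' : ∀ {p : ℕ}, p.Prime → Summable (fun e : ℕ => ‖fdiv v E (p ^ e)‖) := by
    intro p hp
    apply summable_of_ne_finset_zero (s := Finset.range (v + 2))
    intro e he
    rw [Finset.mem_range, not_lt] at he
    have : fdiv v E (p ^ e) = 0 := by
      simp [fdiv, fGplus_prime_pow_zero hp (by omega : v < e)]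
    simp [this]
  refine summable_of_sum_range_le fdiv_nonneg (c := C) fun N => ?_
  obtain ⟨hS, hHS⟩ := EulerProduct.summable_and_hasSum_smoothNumbers_prod_primesBelow_tsum
    fdiv_one fdiv_mul hsum' N
  have step1 : ∑ i ∈ Finset.range N, fdiv v E i =
      ∑ i ∈ (Finset.range N).filter (· ∈ N.smoothNumbers), fdiv v E i := by
    symm
    apply Finset.sum_filter_of_ne
    intro x hx hfx
    have hx0 : x ≠ 0 := by rintro rfl; exact hfx fdiv_zero
    exact Nat.mem_smoothNumbers.mpr ⟨hx0, fun q hq =>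
      lt_of_le_of_lt (Nat.le_of_dvd (Nat.pos_of_ne_zero hx0)
        (Nat.dvd_of_mem_primeFactorsList hq)) (Finset.mem_range.mp hx)⟩
  have step2 : ∑ i ∈ (Finset.range N).filter (· ∈ N.smoothNumbers), fdiv v E i ≤
      ∏ p ∈ N.primesBelow, ∑' e : ℕ, fdiv v E (p ^ e) := by
    calc ∑ i ∈ (Finset.range N).filter (· ∈ N.smoothNumbers), fdiv v E i
        = ∑ x ∈ (Finset.range N).subtype (· ∈ N.smoothNumbers), fdiv v E x :=
          (Finset.sum_subtype_eq_sum_filter _).symm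
      _ ≤ _ := sum_le_hasSum _ (fun i _ => fdiv_nonneg _) hHS
  have step3 : ∏ p ∈ N.primesBelow, (∑' e : ℕ, fdiv v E (p ^ e)) ≤ C := by
    have hfac : ∀ p ∈ N.primesBelow,
        (∑' e : ℕ, fdiv v E (p ^ e)) ≤ Real.exp (c * (1 / (p : ℝ) ^ 2)) := by
      intro p hp
      have hpp : p.Prime := Nat.prime_of_mem_primesBelow hp
      rw [fdiv_tsum_prime_pow hE hpp]
      have hT : ∑ α ∈ Finset.Icc 2 v, fdiv v E (p ^ α) ≤ c * (1 / (p : ℝ) ^ 2) := by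
        have hcard : ((Finset.Icc 2 v).card : ℝ) ≤ (v : ℝ) := by
          exact_mod_cast (by rw [Nat.card_Icc]; omega : (Finset.Icc 2 v).card ≤ v)
        have h2 : (0 : ℝ) ≤ (2 : ℝ) ^ E.card / (p : ℝ) ^ 2 := by
          have := hpp.pos; positivity
        calc ∑ α ∈ Finset.Icc 2 v, fdiv v E (p ^ α)
            ≤ ∑ _α ∈ Finset.Icc 2 v, (2 : ℝ) ^ E.card / (p : ℝ) ^ 2 :=
              Finset.sum_le_sum fun α hα =>
                fdiv_prime_pow_le hpp (Finset.mem_Icc.mp hα).1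
          _ = ((Finset.Icc 2 v).card : ℝ) * ((2 : ℝ) ^ E.card / (p : ℝ) ^ 2) := by
              rw [Finset.sum_const, nsmul_eq_mul]
          _ ≤ (v : ℝ) * ((2 : ℝ) ^ E.card / (p : ℝ) ^ 2) :=
              mul_le_mul_of_nonneg_right hcard h2
          _ = c * (1 / (p : ℝ) ^ 2) := by rw [hc]; ring
      calc 1 + ∑ α ∈ Finset.Icc 2 v, fdiv v E (p ^ α)
          ≤ 1 + c * (1 / (p : ℝ) ^ 2) := by linarith
        _ ≤ Real.exp (c * (1 / (p : ℝ) ^ 2)) := by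
            rw [add_comm]; exact Real.add_one_le_exp _
    calc ∏ p ∈ N.primesBelow, (∑' e : ℕ, fdiv v E (p ^ e))
        ≤ ∏ p ∈ N.primesBelow, Real.exp (c * (1 / (p : ℝ) ^ 2)) :=
          Finset.prod_le_prod (fun p _ => tsum_nonneg fun e => fdiv_nonneg _) hfac
      _ = Real.exp (∑ p ∈ N.primesBelow, c * (1 / (p : ℝ) ^ 2)) := (Real.exp_sum _ _).symm
      _ ≤ C := by
          rw [hC]
          apply Real.exp_le_exp.mpr
          rw [← Finset.mul_sum]
          apply mul_le_mul_of_nonneg_left _ hc0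
          calc ∑ p ∈ N.primesBelow, 1 / (p : ℝ) ^ 2
              ≤ ∑ k ∈ Finset.range N, 1 / (k : ℝ) ^ 2 :=
                Finset.sum_le_sum_of_subset_of_nonneg
                  (fun p hp => Finset.mem_range.mpr (Nat.lt_of_mem_primesBelow hp))
                  (fun k _ _ => by positivity)
            _ ≤ ∑' k : ℕ, 1 / (k : ℝ) ^ 2 := Summable.sum_le_tsum _ (fun k _ => by positivity) hK
  calc ∑ i ∈ Finset.range N, fdiv v E i
      ≤ ∏ p ∈ N.primesBelow, ∑' e : ℕ, fdiv v E (p ^ e) := step1 ▸ step2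
    _ ≤ C := step3

end Stmt10



open Stmt10

/-- `Σ_{m=1}^{∞} f_G^+(m)/m = ∏_{p prime} (1 + f_G^+(p²)/p² + ⋯ + f_G^+(p^v)/p^v)`,
and this quantity is finite (the series converges and the product converges). -/
theorem stmt10 (v : ℕ) (E : Finset (Sym2 (Fin v))) (hE : ∀ a ∈ E, ¬ a.IsDiag) :
    (Summable fun m : ℕ+ => (fGplus v E (m : ℕ) : ℝ) / (m : ℕ)) ∧
    (Multipliable fun p : Nat.Primes =>
      1 + ∑ α ∈ Finset.Icc 2 v, (fGplus v E ((p : ℕ) ^ α) : ℝ) / ((p : ℕ) ^ α : ℕ)) ∧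
    (∑' m : ℕ+, (fGplus v E (m : ℕ) : ℝ) / (m : ℕ)) =
      ∏' p : Nat.Primes,
        (1 + ∑ α ∈ Finset.Icc 2 v, (fGplus v E ((p : ℕ) ^ α) : ℝ) / ((p : ℕ) ^ α : ℕ)) := by

  have hsum : Summable (fdiv v E) := fdiv_summable hE
  have hnorm : Summable (fun n => ‖fdiv v E n‖) :=
    hsum.congr fun n => (Real.norm_of_nonneg (fdiv_nonneg n)).symm
  have hP : HasProd (fun p : Nat.Primes => ∑' e : ℕ, fdiv v E ((p : ℕ) ^ e))
      (∑' n, fdiv v E n) :=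
    EulerProduct.eulerProduct_hasProd fdiv_one fdiv_mul hnorm fdiv_zero
  have hPeq : (fun p : Nat.Primes => ∑' e : ℕ, fdiv v E ((p : ℕ) ^ e)) =
      (fun p : Nat.Primes =>
        1 + ∑ α ∈ Finset.Icc 2 v, (fGplus v E ((p : ℕ) ^ α) : ℝ) / ((p : ℕ) ^ α : ℕ)) := by
    funext p
    rw [fdiv_tsum_prime_pow hE p.prop]
    rfl
  rw [hPeq] at hP
  have htsum_eq : (∑' m : ℕ+, fdiv v E (m : ℕ)) = ∑' n, fdiv v E n := by
    refine Function.Injective.tsum_eq (fun a b h => PNat.coe_injective h) ?_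
    intro x hx
    rw [Function.mem_support] at hx
    rcases Nat.eq_zero_or_pos x with rfl | hpos
    · exact absurd fdiv_zero hx
    · exact ⟨⟨x, hpos⟩, rfl⟩
  exact ⟨hsum.comp_injective (fun a b h => PNat.coe_injective h),
    hP.multipliable, htsum_eq.trans hP.tprod_eq.symm⟩
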